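/- In the binary symmetric example, let X ~ Bern(1/2), Y = X ⊕ Z with Z ~ Bern(α), 0 ≤ α < 1/2, and let R > 0, ε ∈ [0,1) with R/(1−ε) ≤ 1. Then max over conditional pmfs P_{U|X} with (1−ε)I(U;X) ≤ R of I(U;Y) equals 1 − h_b(h_b^{−1}(1 − R/(1−ε)) ⋆ α), where a ⋆ b = a(1−b) + b(1−a), h_b is binary entropy, and h_b^{−1} : [0,1] → [0,1/2] is its inverse. -/

import Mathlib

noncomputable section
open scoped BigOperators
attribute [local instance] Classical.propDecidable
open Real Set

/-- Binary entropy function (base-2 logarithms), convention `0 log 0 = 0`. -/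
noncomputable def hb (p : ℝ) : ℝ :=
  -(p * Real.logb 2 p) - (1 - p) * Real.logb 2 (1 - p)

/-- Inverse of the binary entropy function, mapping `[0,1]` to `[0,1/2]`. -/
noncomputable def hbInv (y : ℝ) : ℝ :=
  sSup {p : ℝ | p ∈ Set.Icc (0 : ℝ) (1 / 2) ∧ hb p ≤ y}

/-- Mutual information (base 2) computed from a joint pmf on a product of finite sets,
convention `0 log 0 = 0`. -/
noncomputable def miJ {A B : Type*} [Fintype A] [Fintype B] (q : A → B → ℝ) : ℝ :=
  ∑ a, ∑ b, if q a b = 0 then 0 else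
    q a b * Real.logb 2 (q a b / ((∑ b', q a b') * (∑ a', q a' b)))

lemma hb_eq (p : ℝ) : hb p = Real.binEntropy p / Real.log 2 := by
  simp [hb, Real.binEntropy, Real.logb, Real.log_inv]; ring

lemma log2_pos : (0:ℝ) < Real.log 2 := Real.log_pos (by norm_num)

@[simp] lemma hb_zero : hb 0 = 0 := by simp [hb_eq]
@[simp] lemma hb_half : hb (1/2) = 1 := by
  rw [hb_eq, show (1:ℝ)/2 = 2⁻¹ by norm_num, Real.binEntropy_two_inv,
    div_self log2_pos.ne']

lemma hb_one_sub (p : ℝ) : hb (1 - p) = hb p := by rw [hb_eq, hb_eq, Real.binEntropy_one_sub]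

lemma hb_nonneg {p : ℝ} (h0 : 0 ≤ p) (h1 : p ≤ 1) : 0 ≤ hb p := by
  rw [hb_eq]; exact div_nonneg (Real.binEntropy_nonneg h0 h1) log2_pos.le

lemma hb_le_one (p : ℝ) : hb p ≤ 1 := by
  rw [hb_eq, div_le_one log2_pos]; exact Real.binEntropy_le_log_two

lemma hb_continuous : Continuous hb := by
  simp only [funext hb_eq]; exact Real.binEntropy_continuous.div_const _

lemma hb_strictMonoOn : StrictMonoOn hb (Icc (0:ℝ) (1/2)) := by
  intro a ha b hb hab
  rw [hb_eq, hb_eq]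
  have := Real.binEntropy_strictMonoOn (by simpa using ha) (by simpa using hb) hab
  rw [div_eq_mul_inv, div_eq_mul_inv]
  exact mul_lt_mul_of_pos_right this (by positivity)

lemma hb_monotoneOn : MonotoneOn hb (Icc (0:ℝ) (1/2)) := hb_strictMonoOn.monotoneOn

lemma hasDerivAt_hb {p : ℝ} (h0 : p ≠ 0) (h1 : p ≠ 1) :
    HasDerivAt hb ((Real.log (1 - p) - Real.log p) / Real.log 2) p := by
  have := (Real.hasDerivAt_binEntropy h0 h1).div_const (Real.log 2)
  simpa [funext hb_eq] using this

-- hbInv lemmas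
lemma hbInv_set_nonempty {y : ℝ} (hy : 0 ≤ y) :
    ({p : ℝ | p ∈ Set.Icc (0 : ℝ) (1 / 2) ∧ hb p ≤ y}).Nonempty :=
  ⟨0, ⟨⟨le_refl 0, by norm_num⟩, by simpa using hy⟩⟩

lemma hbInv_set_bdd (y : ℝ) :
    BddAbove {p : ℝ | p ∈ Set.Icc (0 : ℝ) (1 / 2) ∧ hb p ≤ y} :=
  ⟨1/2, fun p hp => hp.1.2⟩

lemma hbInv_mem {y : ℝ} (hy : 0 ≤ y) : hbInv y ∈ Icc (0:ℝ) (1/2) := by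
  constructor
  · exact le_csSup (hbInv_set_bdd y) ⟨⟨le_refl 0, by norm_num⟩, by simpa using hy⟩
  · exact csSup_le (hbInv_set_nonempty hy) (fun p hp => hp.1.2)

lemma hbInv_set_closed (y : ℝ) :
    IsClosed {p : ℝ | p ∈ Set.Icc (0 : ℝ) (1 / 2) ∧ hb p ≤ y} := by
  have : {p : ℝ | p ∈ Set.Icc (0 : ℝ) (1 / 2) ∧ hb p ≤ y}
      = Icc (0:ℝ) (1/2) ∩ hb ⁻¹' (Iic y) := by ext p; simp [Set.mem_inter_iff]
  rw [this]
  exact isClosed_Icc.inter (IsClosed.preimage hb_continuous isClosed_Iic)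

lemma hbInv_mem_set {y : ℝ} (hy : 0 ≤ y) :
    hbInv y ∈ {p : ℝ | p ∈ Set.Icc (0 : ℝ) (1 / 2) ∧ hb p ≤ y} :=
  (hbInv_set_closed y).csSup_mem (hbInv_set_nonempty hy) (hbInv_set_bdd y)

lemma hb_hbInv {y : ℝ} (hy0 : 0 ≤ y) (hy1 : y ≤ 1) : hb (hbInv y) = y := by
  have hmem := hbInv_mem_set hy0
  rcases hmem with ⟨hIcc, hle⟩
  refine le_antisymm hle ?_
  by_contra h
  push_neg at h
  -- hb (hbInv y) < y; find a slightly larger point still in set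
  rcases lt_or_eq_of_le hIcc.2 with hlt | heq
  · -- hbInv y < 1/2, use IVT / continuity
    have hc : ContinuousOn hb (Icc (hbInv y) (1/2)) := hb_continuous.continuousOn
    have : y ∈ Icc (hb (hbInv y)) (hb (1/2)) := ⟨h.le, by rw [hb_half]; exact hy1⟩
    obtain ⟨z, hz, hzy⟩ := intermediate_value_Icc hlt.le hc this
    have hzmem : z ∈ {p : ℝ | p ∈ Set.Icc (0 : ℝ) (1 / 2) ∧ hb p ≤ y} :=
      ⟨⟨le_trans hIcc.1 hz.1, hz.2⟩, hzy.le⟩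
    have := le_csSup (hbInv_set_bdd y) hzmem
    -- z ≤ hbInv y, but hb z = y > hb (hbInv y), contradict monotonicity
    have hzIcc : z ∈ Icc (0:ℝ) (1/2) := ⟨le_trans hIcc.1 hz.1, hz.2⟩
    have := hb_monotoneOn hzIcc hIcc this
    rw [hzy] at this
    linarith
  · rw [heq, hb_half] at h; linarith

lemma hbInv_hb {t : ℝ} (h0 : 0 ≤ t) (h1 : t ≤ 1/2) : hbInv (hb t) = t := by
  apply le_antisymm
  · apply csSup_le (hbInv_set_nonempty (hb_nonneg h0 (by linarith)))
    intro p hp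
    by_contra hlt
    push_neg at hlt
    have := hb_strictMonoOn ⟨h0, h1⟩ hp.1 hlt
    linarith [hp.2]
  · exact le_csSup (hbInv_set_bdd _) ⟨⟨h0, h1⟩, le_refl _⟩

lemma hbInv_mono {y₁ y₂ : ℝ} (h0 : 0 ≤ y₁) (h : y₁ ≤ y₂) : hbInv y₁ ≤ hbInv y₂ :=
  csSup_le_csSup (hbInv_set_bdd y₂) (hbInv_set_nonempty h0)
    (fun p hp => ⟨hp.1, le_trans hp.2 h⟩)


/-- `L t = log((1-t)/t)` as a difference. -/
noncomputable def LL (t : ℝ) : ℝ := Real.log (1 - t) - Real.log t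

lemma hasDerivAt_LL {t : ℝ} (h0 : t ≠ 0) (h1 : t ≠ 1) :
    HasDerivAt LL (-(1 / (t * (1 - t)))) t := by
  have h1' : 1 - t ≠ 0 := sub_ne_zero.mpr h1.symm
  have d1 : HasDerivAt (fun t : ℝ => Real.log (1 - t)) ((-1) / (1 - t)) t := by
    have := ((hasDerivAt_id t).const_sub 1).log h1'
    simpa using this
  have := d1.sub (Real.hasDerivAt_log h0)
  refine this.congr_deriv ?_
  field_simp
  ring

lemma LL_pos {t : ℝ} (h0 : 0 < t) (h1 : t < 1/2) : 0 < LL t :=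
  sub_pos.mpr (Real.log_lt_log h0 (by linarith))

lemma LL_nonneg {t : ℝ} (h0 : 0 < t) (h1 : t ≤ 1/2) : 0 ≤ LL t := by
  rcases lt_or_eq_of_le h1 with h | h
  · exact (LL_pos h0 h).le
  · subst h
    simp only [LL]
    rw [show (1:ℝ) - 1/2 = 1/2 by norm_num]
    simp

/-- `2(1-2t) ≤ log((1-t)/t)` for `0 < t ≤ 1/2`. -/
lemma LL_ge {t : ℝ} (h0 : 0 < t) (h1 : t ≤ 1/2) : 2 * (1 - 2*t) ≤ LL t := by
  -- F s = log(1+s) - log(1-s) - 2 s is monotone on [0,1)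
  set F : ℝ → ℝ := fun s => Real.log (1+s) - Real.log (1-s) - 2*s with hF
  have hd : ∀ s ∈ Ioo (0:ℝ) 1, HasDerivAt F (1/(1+s) + 1/(1-s) - 2) s := by
    intro s hs
    have h1s : (1:ℝ) + s ≠ 0 := by nlinarith [hs.1]
    have h2s : (1:ℝ) - s ≠ 0 := by nlinarith [hs.2]
    have d1 : HasDerivAt (fun s : ℝ => Real.log (1+s)) (1/(1+s)) s := by
      have := ((hasDerivAt_id s).const_add 1).log h1s
      simpa using this
    have d2 : HasDerivAt (fun s : ℝ => Real.log (1-s)) ((-1)/(1-s)) s := by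
      have := ((hasDerivAt_id s).const_sub 1).log h2s
      simpa using this
    have := (d1.sub d2).sub ((hasDerivAt_id s).const_mul 2)
    refine this.congr_deriv ?_
    field_simp
    ring
  have hmono : MonotoneOn F (Ico (0:ℝ) 1) := by
    have hcont : ContinuousOn F (Ico (0:ℝ) 1) := by
      intro s hs
      have h1s : (1:ℝ) + s ≠ 0 := by nlinarith [hs.1]
      have h2s : (1:ℝ) - s ≠ 0 := by nlinarith [hs.2]
      apply ContinuousAt.continuousWithinAt
      exact (((Real.continuousAt_log h1s).comp (by fun_prop)).sub
        ((Real.continuousAt_log h2s).comp (by fun_prop))).sub (by fun_prop)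
    apply monotoneOn_of_deriv_nonneg (convex_Ico 0 1) hcont
    · intro s hs
      rw [interior_Ico] at hs
      exact (hd s hs).differentiableAt.differentiableWithinAt
    · intro s hs
      rw [interior_Ico] at hs
      rw [(hd s hs).deriv]
      have h1s : (0:ℝ) < 1 + s := by linarith [hs.1]
      have h2s : (0:ℝ) < 1 - s := by linarith [hs.2]
      have heq : 1/(1+s) + 1/(1-s) - 2 = 2*s^2 / ((1+s)*(1-s)) := by field_simp; ring
      rw [heq]
      positivity
  have key : F 0 ≤ F (1 - 2*t) := by
    apply hmono ⟨le_refl 0, by norm_num⟩ ⟨by linarith, by linarith⟩ (by linarith)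
  have hF0 : F 0 = 0 := by simp [hF]
  have hFt : F (1 - 2*t) = LL t - 2*(1-2*t) := by
    have e1 : (1:ℝ) + (1 - 2*t) = 2*(1-t) := by ring
    have e2 : (1:ℝ) - (1 - 2*t) = 2*t := by ring
    simp only [hF, e1, e2]
    rw [Real.log_mul (by norm_num) (by linarith), Real.log_mul (by norm_num) (ne_of_gt h0)]
    simp [LL]
  rw [hF0, hFt] at key
  linarith

noncomputable def GG (t : ℝ) : ℝ := t*(1-t)*LL t/(1-2*t)

lemma hasDerivAt_GG {t : ℝ} (h0 : 0 < t) (h1 : t < 1/2) :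
    HasDerivAt GG ((((1-2*t)*LL t - 1)*(1-2*t) - t*(1-t)*LL t*(-2))/(1-2*t)^2) t := by
  have ht1 : t ≠ 1 := by intro h; rw [h] at h1; norm_num at h1
  have hden : (1:ℝ) - 2*t ≠ 0 := by intro h; nlinarith
  have dnum : HasDerivAt (fun t : ℝ => t*(1-t)*LL t) ((1-2*t)*LL t - 1) t := by
    have d1 : HasDerivAt (fun t : ℝ => t*(1-t)) (1*(1-t)+t*(-1)) t :=
      (hasDerivAt_id t).mul ((hasDerivAt_id t).const_sub 1)
    have := d1.mul (hasDerivAt_LL (ne_of_gt h0) ht1)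
    refine this.congr_deriv ?_
    have h1t : (1:ℝ) - t ≠ 0 := by intro h; nlinarith
    field_simp
    ring
  have dden : HasDerivAt (fun t : ℝ => 1-2*t) (-2) t := by
    have := ((hasDerivAt_id t).const_mul 2).const_sub 1
    simpa using this
  exact dnum.div dden hden

lemma GG_mono : MonotoneOn GG (Ioo (0:ℝ) (1/2)) := by
  have hint : interior (Ioo (0:ℝ) (1/2)) = Ioo (0:ℝ) (1/2) := interior_Ioo
  have hdiff : DifferentiableOn ℝ GG (Ioo (0:ℝ) (1/2)) := fun t ht =>
    (hasDerivAt_GG ht.1 ht.2).differentiableAt.differentiableWithinAt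
  apply monotoneOn_of_deriv_nonneg (convex_Ioo 0 (1/2)) (hdiff.continuousOn)
  · rw [hint]; exact hdiff
  · intro t ht
    rw [hint] at ht
    obtain ⟨ht1, ht2⟩ := ht
    rw [(hasDerivAt_GG ht1 ht2).deriv]
    apply div_nonneg _ (sq_nonneg _)
    have hL := LL_ge ht1 ht2.le
    have hq : (0:ℝ) ≤ 1 - 2*t + 2*t^2 := by nlinarith
    have hcube : (0:ℝ) ≤ (1-2*t)^3 := pow_nonneg (by linarith) 3
    nlinarith [mul_le_mul_of_nonneg_right hL hq]

lemma GG_key {δ β : ℝ} (h0 : 0 < δ) (hdb : δ ≤ β) (hb2 : β < 1/2) :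
    δ*(1-δ)*LL δ*(1-2*β) ≤ β*(1-β)*LL β*(1-2*δ) := by
  have hδ2 : δ < 1/2 := lt_of_le_of_lt hdb hb2
  have := GG_mono ⟨h0, hδ2⟩ ⟨lt_of_lt_of_le h0 hdb, hb2⟩ hdb
  rw [GG, GG, div_le_div_iff₀ (by linarith) (by linarith)] at this
  linarith

lemma ratio_mono {α : ℝ} (hα0 : 0 ≤ α) (hα1 : α < 1/2) :
    MonotoneOn (fun δ => (1-2*α) * (LL (δ*(1-α) + α*(1-δ)) / LL δ)) (Ioo (0:ℝ) (1/2)) := by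
  have hder : ∀ δ ∈ Ioo (0:ℝ) (1/2), HasDerivAt
      (fun δ => (1-2*α) * (LL (δ*(1-α) + α*(1-δ)) / LL δ))
      ((1-2*α) * (((-(1/((δ*(1-α) + α*(1-δ))*(1-(δ*(1-α) + α*(1-δ))))) * (1-2*α)) * LL δ
        - LL (δ*(1-α) + α*(1-δ)) * (-(1/(δ*(1-δ)))))/(LL δ)^2)) δ := by
    intro δ hδ
    set β := δ*(1-α) + α*(1-δ) with hβ
    have hδ0 := hδ.1
    have hδ2 := hδ.2
    have hβδ : δ ≤ β := by nlinarith
    have hβ2 : β < 1/2 := by nlinarith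
    have hβ0 : 0 < β := lt_of_lt_of_le hδ0 hβδ
    have hLδ : LL δ ≠ 0 := (LL_pos hδ0 hδ2).ne'
    have dm : HasDerivAt (fun δ : ℝ => δ*(1-α) + α*(1-δ)) (1-2*α) δ := by
      have := ((hasDerivAt_id δ).mul_const (1-α)).add (((hasDerivAt_id δ).const_sub 1).const_mul α)
      refine this.congr_deriv ?_
      ring
    have dnum : HasDerivAt (fun δ : ℝ => LL (δ*(1-α) + α*(1-δ)))
        ((-(1/(β*(1-β)))) * (1-2*α)) δ := by
      have := (hasDerivAt_LL (ne_of_gt hβ0) (by intro h; rw [h] at hβ2; norm_num at hβ2)).comp δ dm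
      exact this
    have dδ : HasDerivAt LL (-(1/(δ*(1-δ)))) δ :=
      hasDerivAt_LL (ne_of_gt hδ0) (by intro h; rw [h] at hδ2; norm_num at hδ2)
    exact (dnum.div dδ hLδ).const_mul _
  have hint : interior (Ioo (0:ℝ) (1/2)) = Ioo (0:ℝ) (1/2) := interior_Ioo
  have hdiff : DifferentiableOn ℝ _ (Ioo (0:ℝ) (1/2)) := fun δ hδ =>
    (hder δ hδ).differentiableAt.differentiableWithinAt
  apply monotoneOn_of_deriv_nonneg (convex_Ioo 0 (1/2)) (hdiff.continuousOn)
  · rw [hint]; exact hdiff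
  · intro δ hδ
    rw [hint] at hδ
    rw [(hder δ hδ).deriv]
    set β := δ*(1-α) + α*(1-δ) with hβ
    have hδ0 := hδ.1
    have hδ2 := hδ.2
    have hβδ : δ ≤ β := by nlinarith
    have hβ2 : β < 1/2 := by nlinarith
    have hβ0 : 0 < β := lt_of_lt_of_le hδ0 hβδ
    have hkey := GG_key hδ0 hβδ hβ2
    have h1 : (1-2*α)*(δ*(1-δ))*LL δ ≤ β*(1-β)*LL β := by
      have hsub : 1-2*β = (1-2*α)*(1-2*δ) := by rw [hβ]; ring
      rw [hsub] at hkey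
      have h2δ : (0:ℝ) < 1 - 2*δ := by linarith
      have e : δ*(1-δ)*LL δ*((1-2*α)*(1-2*δ)) = ((1-2*α)*(δ*(1-δ))*LL δ) * (1-2*δ) := by ring
      have e2 : β*(1-β)*LL β*(1-2*δ) = (β*(1-β)*LL β)*(1-2*δ) := by ring
      rw [e, e2] at hkey
      exact le_of_mul_le_mul_right hkey h2δ
    apply mul_nonneg (by linarith)
    apply div_nonneg _ (sq_nonneg _)
    have hpos1 : (0:ℝ) < δ*(1-δ) := by nlinarith
    have hpos2 : (0:ℝ) < β*(1-β) := by nlinarith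
    have heq : (-(1/(β*(1-β))) * (1-2*α)) * LL δ - LL β * (-(1/(δ*(1-δ))))
        = (β*(1-β)*LL β - (1-2*α)*(δ*(1-δ))*LL δ) / ((δ*(1-δ))*(β*(1-β))) := by
      have : (1:ℝ) - β ≠ 0 := by linarith
      have : (1:ℝ) - δ ≠ 0 := by linarith
      have : β ≠ 0 := hβ0.ne'
      have : δ ≠ 0 := hδ0.ne'
      field_simp
      ring
    rw [heq]
    exact div_nonneg (by linarith) (by positivity)

-- Section 4: convexity of f(y) = hb (m (hbInv y))
variable {α : ℝ}

/-- The BSC composition map. -/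
noncomputable def mm (α x : ℝ) : ℝ := x*(1-α) + α*(1-x)

lemma mm_mem {x : ℝ} (hα0 : 0 ≤ α) (hα1 : α < 1/2) (h0 : 0 ≤ x) (h1 : x ≤ 1/2) :
    mm α x ∈ Icc (0:ℝ) (1/2) := by
  constructor
  · have : (0:ℝ) ≤ x*(1-α) := by nlinarith
    have : (0:ℝ) ≤ α*(1-x) := by nlinarith
    simp only [mm]; linarith
  · simp only [mm]; nlinarith

lemma mm_mono (hα1 : α < 1/2) : Monotone (mm α) := by
  intro a b hab
  simp only [mm]
  nlinarith

lemma hb_mm_one_sub (hx : (0:ℝ) ≤ 0) : ∀ x : ℝ, hb (mm α (1 - x)) = hb (mm α x) := by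
  intro x
  have : mm α (1-x) = 1 - mm α x := by simp only [mm]; ring
  rw [this, hb_one_sub]

lemma slope_eq (hα0 : 0 ≤ α) (hα1 : α < 1/2) {u v : ℝ} (hu : 0 ≤ u) (huv : u < v)
    (hv : v ≤ 1/2) :
    ∃ ξ ∈ Ioo u v, (hb (mm α v) - hb (mm α u))/(hb v - hb u)
      = (1-2*α) * (LL (mm α ξ) / LL ξ) := by
  have hFc : ContinuousOn (fun x => hb (mm α x)) (Icc u v) :=
    (hb_continuous.comp (show Continuous (mm α) by unfold mm; fun_prop)).continuousOn
  have hGc : ContinuousOn hb (Icc u v) := hb_continuous.continuousOn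
  have hFd : ∀ ξ ∈ Ioo u v, HasDerivAt (fun x => hb (mm α x))
      (LL (mm α ξ) / Real.log 2 * (1-2*α)) ξ := by
    intro ξ hξ
    have hξ0 : 0 < ξ := lt_of_le_of_lt hu hξ.1
    have hξ2 : ξ < 1/2 := lt_of_lt_of_le hξ.2 hv
    have hmξ := mm_mem hα0 hα1 hξ0.le hξ2.le
    have hmξ0 : 0 < mm α ξ := by
      have : ξ ≤ mm α ξ := by simp only [mm]; nlinarith
      linarith
    have hmξ1 : mm α ξ ≠ 1 := by
      intro h; have := hmξ.2; rw [h] at this; norm_num at this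
    have dm : HasDerivAt (mm α) (1-2*α) ξ := by
      have := ((hasDerivAt_id ξ).mul_const (1-α)).add
        (((hasDerivAt_id ξ).const_sub 1).const_mul α)
      refine this.congr_deriv ?_
      try ring
    have := (hasDerivAt_hb (ne_of_gt hmξ0) hmξ1).comp ξ dm
    refine this.congr_deriv ?_
    try simp [LL]
  have hGd : ∀ ξ ∈ Ioo u v, HasDerivAt hb (LL ξ / Real.log 2) ξ := by
    intro ξ hξ
    have hξ0 : 0 < ξ := lt_of_le_of_lt hu hξ.1
    have hξ2 : ξ < 1/2 := lt_of_lt_of_le hξ.2 hv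
    have := hasDerivAt_hb (ne_of_gt hξ0) (by intro h; rw [h] at hξ2; norm_num at hξ2)
    simpa [LL] using this
  obtain ⟨ξ, hξ, heq⟩ := exists_ratio_hasDerivAt_eq_ratio_slope (fun x => hb (mm α x))
    (fun ξ => LL (mm α ξ) / Real.log 2 * (1-2*α)) huv hFc hFd hb
    (fun ξ => LL ξ / Real.log 2) hGc hGd
  refine ⟨ξ, hξ, ?_⟩
  have hξ0 : 0 < ξ := lt_of_le_of_lt hu hξ.1
  have hξ2 : ξ < 1/2 := lt_of_lt_of_le hξ.2 hv
  have hLξ : LL ξ ≠ 0 := (LL_pos hξ0 hξ2).ne'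
  have hhb : hb u < hb v := hb_strictMonoOn ⟨hu, by linarith⟩ ⟨by linarith, hv⟩ huv
  have hne : hb v - hb u ≠ 0 := by linarith
  rw [div_eq_iff hne]
  field_simp at heq ⊢
  nlinarith [heq, log2_pos]

noncomputable def ff (α y : ℝ) : ℝ := hb (mm α (hbInv y))

lemma hbInv_lt_hbInv {x y : ℝ} (hx0 : 0 ≤ x) (hx1 : x ≤ 1) (hy1 : y ≤ 1) (hxy : x < y) :
    hbInv x < hbInv y := by
  have hy0 : 0 ≤ y := le_trans hx0 hxy.le
  rcases (hbInv_mono hx0 hxy.le).lt_or_eq with h | h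
  · exact h
  · exfalso
    have := congrArg hb h
    rw [hb_hbInv hx0 hx1, hb_hbInv hy0 hy1] at this
    exact hxy.ne this

lemma ff_convex (hα0 : 0 ≤ α) (hα1 : α < 1/2) : ConvexOn ℝ (Icc (0:ℝ) 1) (ff α) := by
  apply convexOn_of_slope_mono_adjacent (convex_Icc 0 1)
  intro x y z hx hz hxy hyz
  have hy0 : (0:ℝ) ≤ y := le_trans hx.1 hxy.le
  have hy1 : y ≤ 1 := le_trans hyz.le hz.2
  have hax : hb (hbInv x) = x := hb_hbInv hx.1 hx.2
  have hby : hb (hbInv y) = y := hb_hbInv hy0 hy1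
  have hcz : hb (hbInv z) = z := hb_hbInv hz.1 hz.2
  have hab : hbInv x < hbInv y := hbInv_lt_hbInv hx.1 hx.2 hy1 hxy
  have hbc : hbInv y < hbInv z := hbInv_lt_hbInv hy0 hy1 hz.2 hyz
  obtain ⟨ξ1, hξ1mem, e1⟩ := slope_eq hα0 hα1 (hbInv_mem hx.1).1 hab (hbInv_mem hy0).2
  obtain ⟨ξ2, hξ2mem, e2⟩ := slope_eq hα0 hα1 (hbInv_mem hy0).1 hbc (hbInv_mem hz.1).2
  have d1 : y - x = hb (hbInv y) - hb (hbInv x) := by rw [hax, hby]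
  have d2 : z - y = hb (hbInv z) - hb (hbInv y) := by rw [hcz, hby]
  simp only [ff]
  rw [d1, d2, e1, e2]
  have m1 : ξ1 ∈ Ioo (0:ℝ) (1/2) :=
    ⟨lt_of_le_of_lt (hbInv_mem hx.1).1 hξ1mem.1, lt_of_lt_of_le hξ1mem.2 (hbInv_mem hy0).2⟩
  have m2 : ξ2 ∈ Ioo (0:ℝ) (1/2) :=
    ⟨lt_of_le_of_lt (hbInv_mem hy0).1 hξ2mem.1, lt_of_lt_of_le hξ2mem.2 (hbInv_mem hz.1).2⟩
  have hle : ξ1 ≤ ξ2 := le_of_lt (lt_trans hξ1mem.2 hξ2mem.1)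
  have := ratio_mono hα0 hα1 m1 m2 hle
  simpa [mm] using this

lemma ff_monotoneOn (hα0 : 0 ≤ α) (hα1 : α < 1/2) : MonotoneOn (ff α) (Icc (0:ℝ) 1) := by
  intro y1 h1 y2 h2 h
  exact hb_monotoneOn (mm_mem hα0 hα1 (hbInv_mem h1.1).1 (hbInv_mem h1.1).2)
    (mm_mem hα0 hα1 (hbInv_mem h2.1).1 (hbInv_mem h2.1).2)
    (mm_mono hα1 (hbInv_mono h1.1 h))

@[simp] lemma hb_one : hb 1 = 0 := by simp [hb_eq]

lemma inner_term {a b : ℝ} (ha : 0 ≤ a) (hb' : 0 ≤ b) :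
    (if a = 0 then 0 else a * Real.logb 2 (a / ((a+b) * (1/2))))
      + (if b = 0 then 0 else b * Real.logb 2 (b / ((a+b) * (1/2))))
    = (a+b) - (a+b) * hb (a/(a+b)) := by
  rcases eq_or_lt_of_le ha with ha0 | hapos
  · rcases eq_or_lt_of_le hb' with hb0 | hbpos
    · simp [← ha0, ← hb0]
    · have hbne : b ≠ 0 := ne_of_gt hbpos
      rw [if_pos ha0.symm, if_neg hbne, ← ha0]
      have : b / ((0+b) * (1/2)) = 2 := by field_simp; ring
      rw [this]
      simp [Real.logb_self_eq_one]
  · rcases eq_or_lt_of_le hb' with hb0 | hbpos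
    · have hane : a ≠ 0 := ne_of_gt hapos
      rw [if_neg hane, if_pos hb0.symm, ← hb0]
      have e1 : a / ((a+0) * (1/2)) = 2 := by field_simp; ring
      have e2 : a / (a+0) = 1 := by field_simp; ring
      rw [e1, e2]
      simp [Real.logb_self_eq_one]
    · have hane : a ≠ 0 := ne_of_gt hapos
      have hbne : b ≠ 0 := ne_of_gt hbpos
      have hP : (0:ℝ) < a + b := by linarith
      have hPne : a + b ≠ 0 := ne_of_gt hP
      rw [if_neg hane, if_neg hbne]
      have e1 : a / ((a+b) * (1/2)) = (a/(a+b)) * 2 := by field_simp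
      have e2 : b / ((a+b) * (1/2)) = (b/(a+b)) * 2 := by field_simp
      have l1 : Real.logb 2 ((a/(a+b)) * 2) = Real.logb 2 (a/(a+b)) + 1 := by
        rw [Real.logb_mul (by positivity) (by norm_num), Real.logb_self_eq_one] <;> norm_num
      have l2 : Real.logb 2 ((b/(a+b)) * 2) = Real.logb 2 (b/(a+b)) + 1 := by
        rw [Real.logb_mul (by positivity) (by norm_num), Real.logb_self_eq_one] <;> norm_num
      rw [e1, e2, l1, l2]
      have h1 : 1 - a/(a+b) = b/(a+b) := by field_simp; ring
      rw [hb, h1]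
      set X := Real.logb 2 (a/(a+b))
      set Y := Real.logb 2 (b/(a+b))
      have key : (a+b) * (-(a/(a+b) * X) - b/(a+b) * Y) = -(a*X) - b*Y := by
        field_simp
      rw [key]
      ring

lemma miJ_eq {k : ℕ} (p : Fin k → Bool → ℝ) (hnn : ∀ u x, 0 ≤ p u x)
    (hcol : ∀ x, ∑ u, p u x = 1/2) :
    miJ p = 1 - ∑ u, ((p u true + p u false) * hb (p u true / (p u true + p u false))) := by
  have step : ∀ u : Fin k, (∑ b, if p u b = 0 then 0 else
      p u b * Real.logb 2 (p u b / ((∑ b', p u b') * (∑ a', p a' b))))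
    = (p u true + p u false) - (p u true + p u false) * hb (p u true/(p u true + p u false)) := by
    intro u
    rw [Fintype.sum_bool]
    rw [Fintype.sum_bool (fun b' => p u b'), hcol true, hcol false]
    exact inner_term (hnn u true) (hnn u false)
  rw [miJ, Finset.sum_congr rfl (fun u _ => step u), Finset.sum_sub_distrib]
  have h1 : ∑ u : Fin k, (p u true + p u false) = 1 := by
    rw [Finset.sum_add_distrib, hcol true, hcol false]; norm_num
  rw [h1]

lemma converse {α c : ℝ} (hα0 : 0 ≤ α) (hα1 : α < 1/2) (hc0 : 0 ≤ c) (hc1 : c ≤ 1)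
    {k : ℕ} (p : Fin k → Bool → ℝ) (hnn : ∀ u x, 0 ≤ p u x)
    (hcol : ∀ x, ∑ u, p u x = 1/2) (hmi : c ≤ 1 - miJ p) :
    miJ (fun (u : Fin k) (y : Bool) => ∑ x, p u x * (if y = x then 1 - α else α))
      ≤ 1 - ff α c := by
  set w : Fin k → ℝ := fun u => p u true + p u false with hw
  set ξ : Fin k → ℝ := fun u => p u true / w u with hξ
  set η : Fin k → ℝ := fun u => if ξ u ≤ 1/2 then ξ u else 1 - ξ u with hη
  have hwnn : ∀ u, 0 ≤ w u := fun u => add_nonneg (hnn u true) (hnn u false)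
  have hwsum : ∑ u, w u = 1 := by
    rw [hw]
    rw [Finset.sum_add_distrib, hcol true, hcol false]; norm_num
  have hξmem : ∀ u, ξ u ∈ Icc (0:ℝ) 1 := by
    intro u
    rcases eq_or_lt_of_le (hwnn u) with h0 | hpos
    · have hξ0 : ξ u = 0 := by
        simp only [hξ]
        rw [show w u = 0 from h0.symm, div_zero]
      rw [hξ0]
      exact ⟨le_refl 0, by norm_num⟩
    · exact ⟨div_nonneg (hnn u true) (hwnn u),
        (div_le_one hpos).mpr (by simp only [hw]; linarith [hnn u false])⟩
  have hηmem : ∀ u, η u ∈ Icc (0:ℝ) (1/2) := by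
    intro u
    simp only [hη]
    split_ifs with h
    · exact ⟨(hξmem u).1, h⟩
    · push_neg at h
      exact ⟨by linarith [(hξmem u).2], by linarith⟩
  have hb_η : ∀ u, hb (η u) = hb (ξ u) := by
    intro u
    simp only [hη]
    split_ifs with h
    · rfl
    · exact hb_one_sub (ξ u)
  -- rewrite the channel output
  have hq : (fun (u : Fin k) (y : Bool) => ∑ x, p u x * (if y = x then 1 - α else α))
      = (fun u y => p u true * (if y = true then 1-α else α)
          + p u false * (if y = false then 1-α else α)) := by
    funext u y
    rw [Fintype.sum_bool]
  rw [hq]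
  set Q : Fin k → Bool → ℝ := fun u y => p u true * (if y = true then 1-α else α)
      + p u false * (if y = false then 1-α else α) with hQ
  have hQt : ∀ u, Q u true = p u true * (1-α) + p u false * α := by intro u; simp [hQ]
  have hQf : ∀ u, Q u false = p u true * α + p u false * (1-α) := by intro u; simp [hQ]
  have hQnn : ∀ u y, 0 ≤ Q u y := by
    intro u y
    cases y
    · rw [hQf]; have := hnn u true; have := hnn u false; nlinarith
    · rw [hQt]; have := hnn u true; have := hnn u false; nlinarith
  have hQcol : ∀ y, ∑ u, Q u y = 1/2 := by
    intro y
    cases y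
    · calc ∑ u, Q u false = ∑ u, (p u true * α + p u false * (1-α)) := by
            exact Finset.sum_congr rfl (fun u _ => hQf u)
        _ = (∑ u, p u true) * α + (∑ u, p u false) * (1-α) := by
            rw [Finset.sum_add_distrib, Finset.sum_mul, Finset.sum_mul]
        _ = 1/2 := by rw [hcol true, hcol false]; ring
    · calc ∑ u, Q u true = ∑ u, (p u true * (1-α) + p u false * α) := by
            exact Finset.sum_congr rfl (fun u _ => hQt u)
        _ = (∑ u, p u true) * (1-α) + (∑ u, p u false) * α := by
            rw [Finset.sum_add_distrib, Finset.sum_mul, Finset.sum_mul]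
        _ = 1/2 := by rw [hcol true, hcol false]; ring
  rw [miJ_eq Q hQnn hQcol]
  have hQsum : ∀ u, Q u true + Q u false = w u := by
    intro u; rw [hQt, hQf, hw]; ring
  -- termwise identification with ff
  have key1 : ∀ u, (Q u true + Q u false) * hb (Q u true / (Q u true + Q u false))
      = w u * ff α (hb (η u)) := by
    intro u
    rw [hQsum u]
    rcases eq_or_lt_of_le (hwnn u) with h0 | hpos
    · rw [← h0]; ring
    · have hwne : w u ≠ 0 := ne_of_gt hpos
      have hratio : Q u true / w u = mm α (ξ u) := by
        rw [hQt, hξ, mm, hw]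
        have hwne' : p u true + p u false ≠ 0 := hwne
        field_simp
        ring
      rw [hratio]
      have : ff α (hb (η u)) = hb (mm α (η u)) := by
        rw [ff, hbInv_hb (hηmem u).1 (hηmem u).2]
      rw [this]
      congr 1
      simp only [hη]
      split_ifs with h
      · rfl
      · have : mm α (1 - ξ u) = 1 - mm α (ξ u) := by simp only [mm]; ring
        rw [this, hb_one_sub]
  rw [Finset.sum_congr rfl (fun u _ => key1 u)]
  -- Jensen + monotonicity
  have hpts : ∀ u ∈ Finset.univ, hb (η u) ∈ Icc (0:ℝ) 1 := by
    intro u _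
    exact ⟨hb_nonneg (hηmem u).1 (by linarith [(hηmem u).2]), hb_le_one _⟩
  have hjensen := (ff_convex hα0 hα1).map_sum_le (fun u _ => hwnn u) hwsum hpts
  simp only [smul_eq_mul] at hjensen
  have hSmem : (∑ u, w u * hb (η u)) ∈ Icc (0:ℝ) 1 := by
    constructor
    · apply Finset.sum_nonneg
      intro u _
      exact mul_nonneg (hwnn u) (hpts u (Finset.mem_univ u)).1
    · calc ∑ u, w u * hb (η u) ≤ ∑ u, w u * 1 :=
            Finset.sum_le_sum (fun u _ => mul_le_mul_of_nonneg_left (hb_le_one _) (hwnn u))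
        _ = 1 := by simp [hwsum]
  have hcS : c ≤ ∑ u, w u * hb (η u) := by
    have := hmi
    rw [miJ_eq p hnn hcol] at this
    have heq : ∑ u, w u * hb (η u)
        = ∑ u, ((p u true + p u false) * hb (p u true / (p u true + p u false))) := by
      apply Finset.sum_congr rfl
      intro u _
      rw [hb_η u]
    rw [heq]
    linarith
  have hmono := ff_monotoneOn hα0 hα1 ⟨hc0, hc1⟩ hSmem hcS
  linarith [le_trans hmono hjensen]

lemma achieve {α : ℝ} (hα0 : 0 ≤ α) (hα1 : α < 1/2) {c : ℝ} (hc0 : 0 ≤ c) (hc1 : c ≤ 1) :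
    ∃ (p : Fin 2 → Bool → ℝ), (∀ u x, 0 ≤ p u x) ∧ (∀ x, ∑ u, p u x = 1/2) ∧
      miJ p = 1 - c ∧
      miJ (fun (u : Fin 2) (y : Bool) => ∑ x, p u x * (if y = x then 1-α else α))
        = 1 - ff α c := by
  set δ := hbInv c with hδdef
  have hδ0 : 0 ≤ δ := (hbInv_mem hc0).1
  have hδ2 : δ ≤ 1/2 := (hbInv_mem hc0).2
  have hhbδ : hb δ = c := hb_hbInv hc0 hc1
  set p : Fin 2 → Bool → ℝ := fun u x => if u = 0 then (if x = true then (1-δ)/2 else δ/2)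
      else (if x = true then δ/2 else (1-δ)/2) with hp
  have hp00 : p 0 true = (1-δ)/2 := by simp [hp]
  have hp01 : p 0 false = δ/2 := by simp [hp]
  have hp10 : p 1 true = δ/2 := by simp [hp]
  have hp11 : p 1 false = (1-δ)/2 := by simp [hp]
  have hnn : ∀ u x, 0 ≤ p u x := by
    intro u x
    simp only [hp]
    split_ifs <;> linarith
  have hcol : ∀ x, ∑ u, p u x = 1/2 := by
    intro x
    rw [Fin.sum_univ_two]
    cases x
    · rw [hp01, hp11]; ring
    · rw [hp00, hp10]; ring
  have hsum0 : p 0 true + p 0 false = 1/2 := by rw [hp00, hp01]; ring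
  have hsum1 : p 1 true + p 1 false = 1/2 := by rw [hp10, hp11]; ring
  refine ⟨p, hnn, hcol, ?_, ?_⟩
  · rw [miJ_eq p hnn hcol, Fin.sum_univ_two, hsum0, hsum1, hp00, hp10]
    have e1 : (1-δ)/2 / (1/2 : ℝ) = 1 - δ := by ring
    have e2 : δ/2 / (1/2 : ℝ) = δ := by ring
    rw [e1, e2, hb_one_sub, hhbδ]
    ring
  · -- output distribution
    have hq : (fun (u : Fin 2) (y : Bool) => ∑ x, p u x * (if y = x then 1 - α else α))
        = (fun u y => p u true * (if y = true then 1-α else α)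
            + p u false * (if y = false then 1-α else α)) := by
      funext u y
      rw [Fintype.sum_bool]
    rw [hq]
    set Q : Fin 2 → Bool → ℝ := fun u y => p u true * (if y = true then 1-α else α)
        + p u false * (if y = false then 1-α else α) with hQ
    have hQ0t : Q 0 true = (1 - mm α δ)/2 := by simp [hQ, hp00, hp01, mm]; ring
    have hQ0f : Q 0 false = mm α δ / 2 := by simp [hQ, hp00, hp01, mm]; ring
    have hQ1t : Q 1 true = mm α δ / 2 := by simp [hQ, hp10, hp11, mm]; ring
    have hQ1f : Q 1 false = (1 - mm α δ)/2 := by simp [hQ, hp10, hp11, mm]; ring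
    have hQnn : ∀ u y, 0 ≤ Q u y := by
      intro u y
      simp only [hQ]
      have h1 := hnn u true
      have h2 := hnn u false
      cases y <;> simp <;> nlinarith
    have hQcol : ∀ y, ∑ u, Q u y = 1/2 := by
      intro y
      rw [Fin.sum_univ_two]
      cases y
      · rw [hQ0f, hQ1f]; ring
      · rw [hQ0t, hQ1t]; ring
    rw [miJ_eq Q hQnn hQcol, Fin.sum_univ_two]
    have hs0 : Q 0 true + Q 0 false = 1/2 := by rw [hQ0t, hQ0f]; ring
    have hs1 : Q 1 true + Q 1 false = 1/2 := by rw [hQ1t, hQ1f]; ring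
    rw [hs0, hs1, hQ0t, hQ1t]
    have e1 : (1 - mm α δ)/2 / (1/2 : ℝ) = 1 - mm α δ := by ring
    have e2 : mm α δ/2 / (1/2 : ℝ) = mm α δ := by ring
    rw [e1, e2, hb_one_sub]
    have : ff α c = hb (mm α δ) := by rw [ff, ← hδdef]
    rw [this]
    ring

/-- Mrs. Gerber evaluation for the binary symmetric example: with `X ~ Bern(1/2)`,
`Y = X ⊕ Z`, `Z ~ Bern(α)`, `0 ≤ α < 1/2`, `R > 0`, `ε ∈ [0,1)`, `R/(1−ε) ≤ 1`,
the maximum of `I(U;Y)` over conditional pmfs `P_{U|X}` (equivalently, joint pmfs of `(U,X)`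
with uniform `X`-marginal) with `(1−ε)·I(U;X) ≤ R` equals
`1 − h_b(h_b⁻¹(1 − R/(1−ε)) ⋆ α)` where `a ⋆ b = a(1−b) + b(1−a)`. -/
theorem stmt15 (α R ε : ℝ) (hα0 : 0 ≤ α) (hα1 : α < 1 / 2)
    (hR : 0 < R) (hε0 : 0 ≤ ε) (hε1 : ε < 1) (hRε : R / (1 - ε) ≤ 1) :
    sSup {r : ℝ | ∃ (k : ℕ) (p : Fin k → Bool → ℝ),
        (∀ u x, 0 ≤ p u x) ∧ (∀ x, ∑ u, p u x = 1 / 2) ∧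
        (1 - ε) * miJ p ≤ R ∧
        r = miJ (fun (u : Fin k) (y : Bool) =>
              ∑ x, p u x * (if y = x then 1 - α else α))}
      = 1 - hb (hbInv (1 - R / (1 - ε)) * (1 - α)
          + α * (1 - hbInv (1 - R / (1 - ε)))) := by
  have hε : (0:ℝ) < 1 - ε := by linarith
  set c : ℝ := 1 - R/(1-ε) with hc
  have hc0 : 0 ≤ c := by simp only [hc]; linarith
  have hc1 : c ≤ 1 := by
    have : 0 < R/(1-ε) := div_pos hR hε
    simp only [hc]; linarith
  have hRHSeq : 1 - hb (hbInv c * (1-α) + α * (1 - hbInv c)) = 1 - ff α c := by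
    simp only [ff, mm]
  rw [show hbInv (1 - R / (1 - ε)) * (1 - α) + α * (1 - hbInv (1 - R / (1 - ε)))
      = hbInv c * (1-α) + α * (1 - hbInv c) from rfl, hRHSeq]
  obtain ⟨p2, hnn2, hcol2, hmi2, hval2⟩ := achieve hα0 hα1 hc0 hc1
  have hcons2 : (1 - ε) * miJ p2 ≤ R := by
    rw [hmi2]
    have : (1-ε) * (1 - c) = R := by
      simp only [hc]
      rw [sub_sub_cancel]
      field_simp [hε.ne']
    linarith
  have hmem : (1 - ff α c) ∈ {r : ℝ | ∃ (k : ℕ) (p : Fin k → Bool → ℝ),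
      (∀ u x, 0 ≤ p u x) ∧ (∀ x, ∑ u, p u x = 1 / 2) ∧
      (1 - ε) * miJ p ≤ R ∧
      r = miJ (fun (u : Fin k) (y : Bool) =>
            ∑ x, p u x * (if y = x then 1 - α else α))} :=
    ⟨2, p2, hnn2, hcol2, hcons2, hval2.symm⟩
  have hub : ∀ r ∈ {r : ℝ | ∃ (k : ℕ) (p : Fin k → Bool → ℝ),
      (∀ u x, 0 ≤ p u x) ∧ (∀ x, ∑ u, p u x = 1 / 2) ∧
      (1 - ε) * miJ p ≤ R ∧
      r = miJ (fun (u : Fin k) (y : Bool) =>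
            ∑ x, p u x * (if y = x then 1 - α else α))}, r ≤ 1 - ff α c := by
    rintro r ⟨k, p, hnn, hcol, hcons, rfl⟩
    apply converse hα0 hα1 hc0 hc1 p hnn hcol
    have hle : miJ p ≤ R/(1-ε) := by
      rw [le_div_iff₀ hε]
      linarith
    simp only [hc]
    linarith
  exact le_antisymm (csSup_le ⟨_, hmem⟩ hub) (le_csSup ⟨1 - ff α c, hub⟩ hmem)
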